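/- arXiv:math/0310195 — 3 statements merged into one kernel-verified Lean document; each statement's English description precedes it below -/
import Mathlib

section
/- If K is an invertible n×n real matrix and 1 ≤ k ≤ n−1, then K is k-non-degenerate if and only if K⁻¹ is (n−k)-non-degenerate. -/
/-- `K` is `k`-non-degenerate: every `(n-k) × (n-k)` minor of `K` (obtained by
deleting `k` rows and `k` columns) has nonzero determinant. -/
def kNonDegenerate {n : ℕ} (K : Matrix (Fin n) (Fin n) ℝ) (k : ℕ) : Prop :=
  ∀ r c : Fin (n - k) ↪ Fin n, (K.submatrix r c).det ≠ 0

lemma sum_support_range {m n : ℕ} (e : Fin m ↪ Fin n) (f : Fin n → ℝ)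
    (hf : ∀ j, (¬ ∃ i, e i = j) → f j = 0) : ∑ j, f j = ∑ i, f (e i) := by
  rw [← Finset.sum_map Finset.univ e f]
  refine (Finset.sum_subset (Finset.subset_univ _) ?_).symm
  intro j _ hj
  exact hf j (by simpa [Finset.mem_map] using hj)

lemma exists_compl_embedding {m p n : ℕ} (hmp : m + p = n) (e : Fin m ↪ Fin n) :
    ∃ e' : Fin p ↪ Fin n, ∀ j, (∃ b, e' b = j) ↔ ¬ ∃ a, e a = j := by
  have hcard : ((Finset.univ.map e)ᶜ).card = p := by
    simp [Finset.card_compl, Finset.card_map]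
    omega
  refine ⟨((Finset.univ.map e)ᶜ.orderEmbOfFin hcard).toEmbedding, fun j => ?_⟩
  have hrange : Set.range ((Finset.univ.map e)ᶜ.orderEmbOfFin hcard) =
      ↑((Finset.univ.map e)ᶜ) := Finset.range_orderEmbOfFin _ hcard
  constructor
  · rintro ⟨b, rfl⟩ ⟨a, ha⟩
    have hb : ((Finset.univ.map e)ᶜ.orderEmbOfFin hcard) b ∈ ((Finset.univ.map e)ᶜ) := by
      rw [← Finset.mem_coe, ← hrange]; exact ⟨b, rfl⟩
    rw [Finset.mem_compl] at hb
    exact hb (Finset.mem_map.mpr ⟨a, Finset.mem_univ a, ha⟩)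
  · intro hj
    have hb : j ∈ ((Finset.univ.map e)ᶜ) := by
      simpa [Finset.mem_compl, Finset.mem_map] using hj
    rw [← Finset.mem_coe, ← hrange] at hb
    exact hb

/-- The key "nullity"-style lemma: if a minor of `M⁻¹` is singular, then the
complementary minor of `M` (rows/cols swapped) is singular. -/
lemma inv_minor_singular {n m p : ℕ} (hmp : m + p = n) (M : Matrix (Fin n) (Fin n) ℝ)
    (hM : IsUnit M) (r c : Fin m ↪ Fin n) (r' c' : Fin p ↪ Fin n)
    (hr : ∀ j, (∃ b, r' b = j) ↔ ¬ ∃ a, r a = j)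
    (hc : ∀ j, (∃ b, c' b = j) ↔ ¬ ∃ a, c a = j)
    (h0 : (M⁻¹.submatrix r c).det = 0) : (M.submatrix c' r').det = 0 := by
  have hdet : IsUnit M.det := (Matrix.isUnit_iff_isUnit_det M).mp hM
  obtain ⟨v, hv, hAv⟩ := (Matrix.exists_mulVec_eq_zero_iff).mpr h0
  set x : Fin n → ℝ := Function.extend c v 0 with hx
  have hxc : ∀ i, x (c i) = v i := fun i => c.injective.extend_apply v 0 i
  have hxz : ∀ j, (¬ ∃ i, c i = j) → x j = 0 := fun j hj => Function.extend_apply' v (0 : Fin n → ℝ) j hj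
  set y : Fin n → ℝ := M⁻¹.mulVec x with hy
  have hyr : ∀ a, y (r a) = 0 := by
    intro a
    have h1 : y (r a) = ∑ j, M⁻¹ (r a) j * x j := by
      simp [hy, Matrix.mulVec, dotProduct]
    have h2 : ∑ j, M⁻¹ (r a) j * x j = ∑ i, M⁻¹ (r a) (c i) * x (c i) :=
      sum_support_range c _ (fun j hj => by rw [hxz j hj, mul_zero])
    have h3 : ((M⁻¹.submatrix r c).mulVec v) a = 0 := by rw [hAv]; rfl
    rw [h1, h2]
    simpa [Matrix.mulVec, dotProduct, Matrix.submatrix, hxc] using h3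
  have hMy : M.mulVec y = x := by
    rw [hy, Matrix.mulVec_mulVec, Matrix.mul_nonsing_inv _ hdet, Matrix.one_mulVec]
  have hyne : y ≠ 0 := by
    intro h
    apply hv
    have hx0 : x = 0 := by rw [← hMy, h, Matrix.mulVec_zero M]
    funext i
    rw [← hxc i, hx0]; rfl
  obtain ⟨j, hj⟩ := Function.ne_iff.mp hyne
  have hjr : ∃ b, r' b = j := by
    rw [hr]
    rintro ⟨a, rfl⟩
    exact hj (hyr a)
  obtain ⟨b, hb⟩ := hjr
  set w : Fin p → ℝ := fun b => y (r' b) with hw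
  have hwne : w ≠ 0 := by
    intro h
    apply hj
    rw [← hb]
    exact congrFun h b
  have hMw : (M.submatrix c' r').mulVec w = 0 := by
    funext a
    have h1 : ((M.submatrix c' r').mulVec w) a = ∑ b, M (c' a) (r' b) * y (r' b) := by
      simp [Matrix.mulVec, dotProduct, hw]
    have h2 : ∑ j, M (c' a) j * y j = ∑ b, M (c' a) (r' b) * y (r' b) :=
      sum_support_range r' _ (fun j hjr => by
        rw [show y j = 0 from ?_, mul_zero]
        have : ∃ a, r a = j := by
          by_contra hcon
          exact hjr ((hr j).mpr hcon)
        obtain ⟨a', rfl⟩ := this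
        exact hyr a')
    have h3 : (M.mulVec y) (c' a) = x (c' a) := by rw [hMy]
    have h4 : x (c' a) = 0 := hxz _ ((hc (c' a)).mp ⟨a, rfl⟩)
    have h5 : (M.mulVec y) (c' a) = ∑ j, M (c' a) j * y j := by
      simp [Matrix.mulVec, dotProduct]
    rw [h1, ← h2, ← h5, h3, h4]; rfl
  exact (Matrix.exists_mulVec_eq_zero_iff).mp ⟨w, hwne, hMw⟩

/-- If `K` is an invertible `n × n` real matrix and `1 ≤ k ≤ n - 1`,
then `K` is `k`-non-degenerate iff `K⁻¹` is `(n-k)`-non-degenerate. -/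
theorem stmt_1 {n k : ℕ} (K : Matrix (Fin n) (Fin n) ℝ) (hK : IsUnit K)
    (hk1 : 1 ≤ k) (hk2 : k ≤ n - 1) :
    kNonDegenerate K k ↔ kNonDegenerate K⁻¹ (n - k) := by
  have hn : 2 ≤ n := by omega
  have hkn : k ≤ n := by omega
  have h1 : n - (n - k) = k := Nat.sub_sub_self hkn
  have hdet : IsUnit K.det := (Matrix.isUnit_iff_isUnit_det K).mp hK
  have hinv : IsUnit K⁻¹ := by
    rw [Matrix.isUnit_iff_isUnit_det]
    exact K.isUnit_nonsing_inv_det hdet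
  have hinvinv : K⁻¹⁻¹ = K := K.nonsing_inv_nonsing_inv hdet
  constructor
  · intro H r c
    intro h0
    obtain ⟨r', hr'⟩ := exists_compl_embedding (p := n - k) (by omega) r
    obtain ⟨c', hc'⟩ := exists_compl_embedding (p := n - k) (by omega) c
    exact H c' r' (inv_minor_singular (by omega) K hK r c r' c' hr' hc' h0)
  · intro H r c
    intro h0
    obtain ⟨r', hr'⟩ := exists_compl_embedding (p := k) (by omega) r
    obtain ⟨c', hc'⟩ := exists_compl_embedding (p := k) (by omega) c
    have h0' : ((K⁻¹)⁻¹.submatrix r c).det = 0 := by rw [hinvinv]; exact h0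
    have key : ((K⁻¹).submatrix c' r').det = 0 :=
      inv_minor_singular (by omega) (K⁻¹) hinv r c r' c' hr' hc' h0'
    have e : Fin (n - (n - k)) ≃ Fin k := finCongr h1
    have := H (e.toEmbedding.trans c') (e.toEmbedding.trans r')
    apply this
    have : K⁻¹.submatrix (e.toEmbedding.trans c') (e.toEmbedding.trans r') =
        ((K⁻¹).submatrix c' r').submatrix e e := by
      ext i j; simp [Matrix.submatrix]
    rw [this, Matrix.det_submatrix_equiv_self, key]
end

section
/- If A is a k-cut of a balanced bipartite graph G, then every perfect matching of G contains exactly k edges connecting A to its complement, and each such edge joins a black vertex of A to a white vertex of the complement of A. -/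
/-- If `A` is a `k`-cut of a balanced bipartite graph `G` (colors given
by `black`), then every perfect matching of `G` (encoded by an adjacency-preserving
involution `f`) contains exactly `k` edges connecting `A` to its complement, and each
such edge joins a black vertex of `A` to a white vertex of the complement of `A`. -/
theorem stmt_3 {V : Type*} [Fintype V] [DecidableEq V]
    (G : SimpleGraph V) (black : V → Prop) [DecidablePred black]
    (hbip : ∀ u v, G.Adj u v → (black u ↔ ¬ black v))
    (hbal : (Finset.univ.filter black).card
      = (Finset.univ.filter (fun v => ¬ black v)).card)
    (k : ℕ) (A : Finset V)
    (hA1 : ∃ w ∈ A, ¬ black w)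
    (hA2 : (A.filter black).card = (A.filter (fun v => ¬ black v)).card + k)
    (hA3 : ∀ u v, G.Adj u v → u ∈ A → v ∉ A → black u)
    (f : V → V) (hinv : Function.Involutive f) (hadj : ∀ v, G.Adj v (f v)) :
    (A.filter (fun v => f v ∉ A)).card = k ∧
      ∀ v ∈ A, f v ∉ A → black v ∧ ¬ black (f v) := by
  have key : ∀ v ∈ A, f v ∉ A → black v ∧ ¬ black (f v) := by
    intro v hv hfv
    have hb : black v := hA3 v (f v) (hadj v) hv hfv
    exact ⟨hb, (hbip v (f v) (hadj v)).mp hb⟩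
  refine ⟨?_, key⟩
  -- f gives a bijection between black vertices of A whose partner stays in A
  -- and white vertices of A
  have hcard : (((A.filter black)).filter (fun v => f v ∈ A)).card
      = (A.filter (fun v => ¬ black v)).card := by
    apply Finset.card_bij (fun v _ => f v)
    · intro v hv
      simp only [Finset.mem_filter] at hv ⊢
      exact ⟨hv.2, (hbip v (f v) (hadj v)).mp hv.1.2⟩
    · intro a _ b _ hab
      have := congrArg f hab
      rwa [hinv a, hinv b] at this
    · intro w hw
      simp only [Finset.mem_filter] at hw
      obtain ⟨hwA, hwb⟩ := hw
      have hfwA : f w ∈ A := by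
        by_contra hfw
        exact hwb (key w hwA hfw).1
      have hfwb : black (f w) := by
        by_contra hfwb
        have hAdj : G.Adj (f w) w := by
          have := hadj (f w); rwa [hinv w] at this
        exact hwb ((hbip (f w) w hAdj).not_left.mp hfwb)
      refine ⟨f w, ?_, hinv w⟩
      simp only [Finset.mem_filter]
      exact ⟨⟨hfwA, hfwb⟩, by rw [hinv w]; exact hwA⟩
  have hsplit : (((A.filter black)).filter (fun v => f v ∈ A)).card
      + (((A.filter black)).filter (fun v => ¬ f v ∈ A)).card
      = (A.filter black).card :=
    Finset.card_filter_add_card_filter_not _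
  have hcross : ((A.filter black)).filter (fun v => ¬ f v ∈ A)
      = A.filter (fun v => f v ∉ A) := by
    ext v
    simp only [Finset.mem_filter, and_assoc]
    constructor
    · rintro ⟨h1, _, h3⟩; exact ⟨h1, h3⟩
    · rintro ⟨h1, h2⟩; exact ⟨h1, (key v h1 h2).1, h2⟩
  rw [hcross] at hsplit
  omega
end

section
/- Let P be a polynomial in variables ν(e) (indexed by the edges e of a finite connected balanced bipartite graph G without unused edges) and α, β, whose monomials in the ν-variables are exactly the products ∏_{e∈M} ν(e) over perfect matchings M of G (each with a nonzero coefficient that is a monomial in α,β times a sign, and each matching occurring in exactly one monomial). If P = P₁P₂ is any factorization, then one of the factors is a monomial in α and β alone. -/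
open MvPolynomial

namespace Stmt14

variable {σ : Type*} [DecidableEq σ]

omit [DecidableEq σ] in
lemma exists_equiv_zero [Fintype σ] (v : σ) :
    ∃ (m : ℕ) (g : σ ≃ Fin (m + 1)), g v = 0 := by
  have h0 : 0 < Fintype.card σ := Fintype.card_pos_iff.mpr ⟨v⟩
  obtain ⟨m, hm⟩ : ∃ m, Fintype.card σ = m + 1 := ⟨Fintype.card σ - 1, by omega⟩
  let g₀ : σ ≃ Fin (m + 1) := (Fintype.equivFin σ).trans (finCongr hm)
  refine ⟨m, g₀.trans (Equiv.swap (g₀ v) 0), ?_⟩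
  simp [Equiv.swap_apply_left]

lemma support_slice {m : ℕ} (g : σ ≃ Fin (m + 1)) {v : σ} (hg : g v = 0)
    (p : MvPolynomial σ ℝ) :
    (finSuccEquiv ℝ m (rename g p)).support = p.support.image (fun mo => mo v) := by
  rw [support_finSuccEquiv, support_rename_of_injective g.injective, Finset.image_image]
  refine Finset.image_congr ?_
  intro mo _
  simp only [Function.comp_apply]
  rw [← hg, Finsupp.mapDomain_apply g.injective]

lemma exists_support_mul_ge [Fintype σ] {p q : MvPolynomial σ ℝ} (hp : p ≠ 0) (hq : q ≠ 0)
    (v : σ) {m₁ m₂ : σ →₀ ℕ} (h1 : m₁ ∈ p.support) (h2 : m₂ ∈ q.support) :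
    ∃ m ∈ (p * q).support, m₁ v + m₂ v ≤ m v := by
  obtain ⟨n, g, hg⟩ := exists_equiv_zero v
  set F : MvPolynomial σ ℝ → Polynomial (MvPolynomial (Fin n) ℝ) :=
    fun r => finSuccEquiv ℝ n (rename g r) with hF
  have hFmul : F (p * q) = F p * F q := by simp [hF, map_mul]
  have hFp : F p ≠ 0 := by
    simp only [hF, ne_eq, EmbeddingLike.map_eq_zero_iff]
    exact fun h => hp (by simpa using (rename_injective _ g.injective) (by simpa using h))
  have hFq : F q ≠ 0 := by
    simp only [hF, ne_eq, EmbeddingLike.map_eq_zero_iff]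
    exact fun h => hq (by simpa using (rename_injective _ g.injective) (by simpa using h))
  have hd1 : m₁ v ≤ (F p).natDegree := by
    apply Polynomial.le_natDegree_of_mem_supp
    rw [hF, support_slice g hg]
    exact Finset.mem_image_of_mem _ h1
  have hd2 : m₂ v ≤ (F q).natDegree := by
    apply Polynomial.le_natDegree_of_mem_supp
    rw [hF, support_slice g hg]
    exact Finset.mem_image_of_mem _ h2
  have hdeg : (F (p * q)).natDegree = (F p).natDegree + (F q).natDegree := by
    rw [hFmul, Polynomial.natDegree_mul hFp hFq]
  have hne : F (p * q) ≠ 0 := by rw [hFmul]; exact mul_ne_zero hFp hFq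
  have hmem : (F (p * q)).natDegree ∈ (F (p * q)).support :=
    Polynomial.natDegree_mem_support_of_nonzero hne
  rw [hF, support_slice g hg] at hmem
  obtain ⟨m, hm, hmv⟩ := Finset.mem_image.mp hmem
  exact ⟨m, hm, by rw [hmv, hdeg]; omega⟩

lemma eq_monomial_of_mul_eq_monomial [Fintype σ] {p q : MvPolynomial σ ℝ} {mo : σ →₀ ℕ} {c : ℝ}
    (hc : c ≠ 0) (h : p * q = monomial mo c) : ∃ m' c', q = monomial m' c' := by
  have hne : p * q ≠ 0 := by rw [h]; simpa using hc
  have hp : p ≠ 0 := fun h0 => hne (by rw [h0, zero_mul])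
  have hq : q ≠ 0 := fun h0 => hne (by rw [h0, mul_zero])
  have key : ∀ (v : σ), ∀ m₁ ∈ q.support, ∀ m₂ ∈ q.support, m₁ v = m₂ v := by
    intro v m₁ hm₁ m₂ hm₂
    obtain ⟨n, g, hg⟩ := exists_equiv_zero v
    set F : MvPolynomial σ ℝ → Polynomial (MvPolynomial (Fin n) ℝ) :=
      fun r => finSuccEquiv ℝ n (rename g r) with hF
    have hFp : F p ≠ 0 := by
      simp only [hF, ne_eq, EmbeddingLike.map_eq_zero_iff]
      exact fun h0 => hp (by simpa using (rename_injective _ g.injective) (by simpa using h0))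
    have hFq : F q ≠ 0 := by
      simp only [hF, ne_eq, EmbeddingLike.map_eq_zero_iff]
      exact fun h0 => hq (by simpa using (rename_injective _ g.injective) (by simpa using h0))
    have hsupp : (F (p * q)).support = {mo v} := by
      rw [hF, support_slice g hg, h, support_monomial, if_neg hc, Finset.image_singleton]
    have hFne : F (p * q) ≠ 0 := by
      intro h0
      rw [h0, Polynomial.support_zero] at hsupp
      exact absurd hsupp.symm (Finset.singleton_ne_empty _)
    have hdeq : (F (p * q)).natDegree = mo v := by
      refine le_antisymm (Polynomial.natDegree_le_iff_coeff_eq_zero.mpr ?_) ?_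
      · intro k hk
        by_contra h0
        have hk' : k ∈ (F (p * q)).support := Polynomial.mem_support_iff.mpr h0
        rw [hsupp, Finset.mem_singleton] at hk'
        omega
      · apply Polynomial.le_natDegree_of_mem_supp
        rw [hsupp]; exact Finset.mem_singleton_self _
    have hteq : (F (p * q)).natTrailingDegree = mo v := by
      have h1 := Polynomial.natTrailingDegree_mem_support_of_nonzero hFne
      rw [hsupp, Finset.mem_singleton] at h1
      exact h1
    have hmul : F (p * q) = F p * F q := by simp [hF, map_mul]
    have hD : (F p).natDegree + (F q).natDegree = mo v := by
      rw [← hdeq, hmul, Polynomial.natDegree_mul hFp hFq]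
    have hT : (F p).natTrailingDegree + (F q).natTrailingDegree = mo v := by
      rw [← hteq, hmul, Polynomial.natTrailingDegree_mul hFp hFq]
    have hle1 := Polynomial.natTrailingDegree_le_natDegree (p := F p)
    have hle2 := Polynomial.natTrailingDegree_le_natDegree (p := F q)
    have hmem : ∀ mm ∈ q.support, mm v ∈ (F q).support := by
      intro mm hmm
      rw [hF, support_slice g hg]
      exact Finset.mem_image_of_mem _ hmm
    have h1 := Polynomial.le_natDegree_of_mem_supp _ (hmem m₁ hm₁)
    have h1' := Polynomial.natTrailingDegree_le_of_mem_supp _ (hmem m₁ hm₁)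
    have h2 := Polynomial.le_natDegree_of_mem_supp _ (hmem m₂ hm₂)
    have h2' := Polynomial.natTrailingDegree_le_of_mem_supp _ (hmem m₂ hm₂)
    omega
  obtain ⟨m', hm'⟩ := support_nonempty.mpr hq
  refine ⟨m', coeff m' q, ?_⟩
  have hall : ∀ mm ∈ q.support, mm = m' := by
    intro mm hmm
    ext v
    exact key v mm hmm m' hm'
  ext mm
  rw [coeff_monomial]
  by_cases hc' : m' = mm
  · rw [if_pos hc', hc']
  · rw [if_neg hc']
    by_contra h0
    exact hc' ((hall mm (mem_support_iff.mpr h0)).symm)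

omit [DecidableEq σ] in
lemma pderiv_rep (v : σ) (p : MvPolynomial σ ℝ) :
    pderiv v p = ∑ m ∈ p.support,
      monomial (m - Finsupp.single v 1) (coeff m p * (m v : ℝ)) := by
  conv_lhs => rw [p.as_sum, map_sum]
  exact Finset.sum_congr rfl (fun m _ => by rw [pderiv_monomial])

lemma pderiv_ne_zero_of_mem {v : σ} {p : MvPolynomial σ ℝ} {m : σ →₀ ℕ}
    (hm : m ∈ p.support) (hv : 1 ≤ m v) : pderiv v p ≠ 0 := by
  intro h0
  have hc : coeff (m - Finsupp.single v 1) (pderiv v p) = coeff m p * (m v : ℝ) := by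
    rw [pderiv_rep, coeff_sum]
    rw [Finset.sum_eq_single_of_mem m hm]
    · rw [coeff_monomial, if_pos rfl]
    · intro m' hm' hne
      rw [coeff_monomial]
      by_cases h1 : m' v = 0
      · rw [h1]; simp
      · rw [if_neg]
        intro heq
        apply hne
        ext a
        have h2 := DFunLike.congr_fun heq a
        by_cases ha : a = v
        · subst ha
          simp only [Finsupp.tsub_apply, Finsupp.single_eq_same] at h2
          omega
        · simp only [Finsupp.tsub_apply,
            Finsupp.single_eq_of_ne' (Ne.symm ha), Nat.sub_zero] at h2
          omega
  rw [h0, coeff_zero] at hc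
  have h1 : coeff m p ≠ 0 := mem_support_iff.mp hm
  have h2 : (m v : ℝ) ≠ 0 := Nat.cast_ne_zero.mpr (by omega)
  exact (mul_ne_zero h1 h2) hc.symm

omit [DecidableEq σ] in
lemma pderiv_eq_zero_of_coord {v : σ} {p : MvPolynomial σ ℝ}
    (h : ∀ m ∈ p.support, m v = 0) : pderiv v p = 0 := by
  rw [pderiv_rep]
  apply Finset.sum_eq_zero
  intro m hm
  rw [h m hm]
  simp

omit [DecidableEq σ] in
lemma pderiv_pderiv_eq_zero_of {v w : σ} (hvw : v ≠ w) {p : MvPolynomial σ ℝ}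
    (h : ∀ m ∈ p.support, m w = 0 ∨ m v = 0) :
    pderiv v (pderiv w p) = 0 := by
  rw [pderiv_rep w p, map_sum]
  apply Finset.sum_eq_zero
  intro m hm
  rw [pderiv_monomial]
  rcases h m hm with h0 | h0
  · rw [h0]; simp
  · have hz : ((m - Finsupp.single w 1 : σ →₀ ℕ)) v = 0 := by
      rw [Finsupp.tsub_apply]
      rw [Finsupp.single_eq_of_ne' (Ne.symm hvw)]
      omega
    rw [hz]; simp

omit [DecidableEq σ] in
lemma prod_X_single {R : Type*} [CommSemiring R] {ι : Type*} (s : Finset ι) (g : ι → σ) :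
    (∏ i ∈ s, (X (g i) : MvPolynomial σ R)) =
      monomial (∑ i ∈ s, Finsupp.single (g i) 1) 1 := by
  classical
  induction s using Finset.induction_on with
  | empty => simp
  | insert _ _ hni ih =>
      rw [Finset.prod_insert hni, Finset.sum_insert hni, ih, X, monomial_mul, one_mul]

end Stmt14

/-- Let `G` be a finite connected balanced bipartite graph with no
unused edges, and let `P` be the polynomial in the edge-weight variables `ν(e)` and
`α, β` whose monomials are exactly the products `∏_{e ∈ M} ν(e)` over perfect
matchings `M` of `G`, each with coefficient a sign `±1` times a monomial in `α, β`.
Then in any factorization `P = P₁ P₂`, one of the factors is a monomial in `α` and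
`β` alone. -/
theorem stmt_14 {B W : Type*} [Fintype B] [Fintype W] [DecidableEq B] [DecidableEq W]
    (Adj : B → W → Prop) [∀ b w, Decidable (Adj b w)]
    (hconn : ∀ x y : B ⊕ W, Relation.ReflTransGen
      (fun p q => ∃ b w, Adj b w ∧
        ((p = Sum.inl b ∧ q = Sum.inr w) ∨ (p = Sum.inr w ∧ q = Sum.inl b))) x y)
    (hnounused : ∀ b w, Adj b w →
      ∃ f : B ≃ W, (∀ b', Adj b' (f b')) ∧ f b = w)
    (hmatch : ∃ f : B ≃ W, ∀ b, Adj b (f b))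
    (ε : (B ≃ W) → ℝ) (hε : ∀ f, ε f = 1 ∨ ε f = -1)
    (ea eb : (B ≃ W) → ℕ)
    (P : MvPolynomial ((B × W) ⊕ Fin 2) ℝ)
    (hP : P = ∑ f ∈ Finset.univ.filter (fun f : B ≃ W => ∀ b, Adj b (f b)),
      C (ε f) * X (Sum.inr 0) ^ (ea f) * X (Sum.inr 1) ^ (eb f) *
        ∏ b : B, X (Sum.inl (b, f b)))
    (P₁ P₂ : MvPolynomial ((B × W) ⊕ Fin 2) ℝ)
    (hfac : P = P₁ * P₂) :
    (∃ (r : ℝ) (i j : ℕ),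
        P₁ = C r * X (Sum.inr 0) ^ i * X (Sum.inr 1) ^ j) ∨
      (∃ (r : ℝ) (i j : ℕ),
        P₂ = C r * X (Sum.inr 0) ^ i * X (Sum.inr 1) ^ j) := by
  classical
  set M : Finset (B ≃ W) := Finset.univ.filter (fun f : B ≃ W => ∀ b, Adj b (f b)) with hM
  set d : (B ≃ W) → ((B × W) ⊕ Fin 2 →₀ ℕ) := fun f =>
    Finsupp.single (Sum.inr 0) (ea f) + Finsupp.single (Sum.inr 1) (eb f) +
      ∑ b : B, Finsupp.single (Sum.inl (b, f b)) 1 with hdd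
  -- evaluation of d on edge variables
  have hd : ∀ (f : B ≃ W) (b : B) (w : W),
      d f (Sum.inl (b, w)) = if f b = w then 1 else 0 := by
    intro f b w
    have h1 : ((∑ b' : B, Finsupp.single (Sum.inl (b', f b'))
        (1 : ℕ) : (B × W) ⊕ Fin 2 →₀ ℕ)) (Sum.inl (b, w))
        = if f b = w then 1 else 0 := by
      rw [Finsupp.finset_sum_apply]
      rw [Finset.sum_eq_single b]
      · simp [Finsupp.single_apply]
      · intro b' _ hb'
        rw [Finsupp.single_eq_of_ne']
        simp [hb']
      · intro hb; exact absurd (Finset.mem_univ b) hb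
    simp only [hdd, Finsupp.add_apply, h1]
    rw [Finsupp.single_eq_of_ne' (by simp), Finsupp.single_eq_of_ne' (by simp)]
    simp
  have hdinj : ∀ f g : B ≃ W, d f = d g → f = g := by
    intro f g h
    apply Equiv.ext
    intro b
    have h1 := DFunLike.congr_fun h (Sum.inl (b, f b))
    rw [hd, hd, if_pos rfl] at h1
    by_contra hne
    rw [if_neg (fun hh => hne hh.symm)] at h1
    exact one_ne_zero h1
  -- P as a sum of monomials
  have hPsum : P = ∑ f ∈ M, monomial (d f) (ε f) := by
    rw [hP]
    refine Finset.sum_congr rfl (fun f _ => ?_)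
    rw [Stmt14.prod_X_single Finset.univ
      (fun b => (Sum.inl (b, f b) : (B × W) ⊕ Fin 2))]
    rw [X_pow_eq_monomial, X_pow_eq_monomial, C_apply, monomial_mul, monomial_mul,
      monomial_mul]
    simp [hdd]
  have hε0 : ∀ f, ε f ≠ 0 := by
    intro f
    rcases hε f with h | h <;> rw [h] <;> norm_num
  have hcoeff : ∀ f₀ ∈ M, coeff (d f₀) P = ε f₀ := by
    intro f₀ hf₀
    rw [hPsum, coeff_sum]
    rw [Finset.sum_eq_single_of_mem f₀ hf₀]
    · rw [coeff_monomial, if_pos rfl]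
    · intro f _ hne
      rw [coeff_monomial, if_neg (fun h => hne (hdinj f f₀ h))]
  obtain ⟨f₀, hf₀adj⟩ := hmatch
  have hf₀M : f₀ ∈ M := Finset.mem_filter.mpr ⟨Finset.mem_univ _, hf₀adj⟩
  have hPne : P ≠ 0 := by
    intro h0
    exact hε0 f₀ (by rw [← hcoeff f₀ hf₀M, h0, coeff_zero])
  have hPPne : P₁ * P₂ ≠ 0 := by rw [← hfac]; exact hPne
  have hP1ne : P₁ ≠ 0 := left_ne_zero_of_mul hPPne
  have hP2ne : P₂ ≠ 0 := right_ne_zero_of_mul hPPne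
  -- support of P consists of matchings
  have hsupp : ∀ m ∈ P.support, ∃ f ∈ M, m = d f := by
    intro m hm
    by_contra h
    push_neg at h
    apply mem_support_iff.mp hm
    rw [hPsum, coeff_sum]
    apply Finset.sum_eq_zero
    intro f hf
    rw [coeff_monomial, if_neg (fun hh => (h f hf) hh.symm)]
  have hle1 : ∀ m ∈ P.support, ∀ (b : B) (w : W), m (Sum.inl (b, w)) ≤ 1 := by
    intro m hm b w
    obtain ⟨f, _, rfl⟩ := hsupp m hm
    rw [hd]
    split <;> omega
  have hnonadj : ∀ m ∈ P.support, ∀ b w, ¬ Adj b w → m (Sum.inl (b, w)) = 0 := by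
    intro m hm b w hn
    obtain ⟨f, hf, rfl⟩ := hsupp m hm
    rw [hd, if_neg]
    intro he
    exact hn (he ▸ (Finset.mem_filter.mp hf).2 b)
  -- exclusivity
  have hexcl : ∀ (b : B) (w : W), (∃ m ∈ P₁.support, 1 ≤ m (Sum.inl (b, w))) →
      (∃ m ∈ P₂.support, 1 ≤ m (Sum.inl (b, w))) → False := by
    rintro b w ⟨m₁, hm₁, h1⟩ ⟨m₂, hm₂, h2⟩
    obtain ⟨m, hm, hge⟩ :=
      Stmt14.exists_support_mul_ge hP1ne hP2ne (Sum.inl (b, w)) hm₁ hm₂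
    rw [← hfac] at hm
    have := hle1 m hm b w
    omega
  -- non-adjacent edges appear in no factor
  have hnonadjzero : ∀ (Q₁ Q₂ : MvPolynomial ((B × W) ⊕ Fin 2) ℝ), P = Q₁ * Q₂ →
      ∀ m ∈ Q₂.support, ∀ b w, ¬ Adj b w → m (Sum.inl (b, w)) = 0 := by
    intro Q₁ Q₂ hQ m hm b w hna
    have hQne : Q₁ * Q₂ ≠ 0 := by rw [← hQ]; exact hPne
    have h1 : Q₁ ≠ 0 := left_ne_zero_of_mul hQne
    have h2 : Q₂ ≠ 0 := right_ne_zero_of_mul hQne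
    by_contra h0
    obtain ⟨m₁, hm₁⟩ := support_nonempty.mpr h1
    obtain ⟨mm, hmm, hge⟩ :=
      Stmt14.exists_support_mul_ge h1 h2 (Sum.inl (b, w)) hm₁ hm
    rw [← hQ] at hmm
    have := hnonadj mm hmm b w hna
    omega
  -- dichotomy for adjacent edges
  have hdich : ∀ b w, Adj b w → (∃ m ∈ P₁.support, 1 ≤ m (Sum.inl (b, w))) ∨
      (∃ m ∈ P₂.support, 1 ≤ m (Sum.inl (b, w))) := by
    intro b w ha
    obtain ⟨f, hfadj, hfb⟩ := hnounused b w ha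
    have hfM : f ∈ M := Finset.mem_filter.mpr ⟨Finset.mem_univ _, hfadj⟩
    have hmem : d f ∈ P.support := mem_support_iff.mpr (by
      rw [hcoeff f hfM]; exact hε0 f)
    have hdv : d f (Sum.inl (b, w)) = 1 := by rw [hd, if_pos hfb]
    rw [hfac] at hmem
    have hmem2 := MvPolynomial.support_mul P₁ P₂ hmem
    obtain ⟨m₁, hm₁, m₂, hm₂, heq⟩ := Finset.mem_add.mp hmem2
    have hsum : m₁ (Sum.inl (b, w)) + m₂ (Sum.inl (b, w)) = 1 := by
      rw [← Finsupp.add_apply, heq, hdv]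
    rcases Nat.le_one_iff_eq_zero_or_eq_one.mp hsum.le with _ | _
    all_goals {
      by_cases hc1 : 1 ≤ m₁ (Sum.inl (b, w))
      · exact Or.inl ⟨m₁, hm₁, hc1⟩
      · exact Or.inr ⟨m₂, hm₂, by omega⟩ }
  -- key shared-vertex contradiction
  have key : ∀ (b₁ : B) (w₁ : W) (b₂ : B) (w₂ : W), Adj b₁ w₁ → Adj b₂ w₂ →
      (Sum.inl (b₁, w₁) : (B × W) ⊕ Fin 2) ≠ Sum.inl (b₂, w₂) →
      (b₁ = b₂ ∨ w₁ = w₂) →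
      (∃ m ∈ P₁.support, 1 ≤ m (Sum.inl (b₁, w₁))) →
      (∃ m ∈ P₂.support, 1 ≤ m (Sum.inl (b₂, w₂))) → False := by
    intro b₁ w₁ b₂ w₂ h₁ h₂ hne hshare hS1 hS2
    have hn12 : ∀ m ∈ P₂.support, m (Sum.inl (b₁, w₁)) = 0 := by
      intro m hm
      by_contra h0
      exact hexcl b₁ w₁ hS1 ⟨m, hm, by omega⟩
    have hn21 : ∀ m ∈ P₁.support, m (Sum.inl (b₂, w₂)) = 0 := by
      intro m hm
      by_contra h0
      exact hexcl b₂ w₂ ⟨m, hm, by omega⟩ hS2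
    have hD2 : pderiv (Sum.inl (b₂, w₂)) P = P₁ * pderiv (Sum.inl (b₂, w₂)) P₂ := by
      rw [hfac, pderiv_mul, Stmt14.pderiv_eq_zero_of_coord hn21, zero_mul, zero_add]
    have hmix : pderiv (Sum.inl (b₁, w₁)) (pderiv (Sum.inl (b₂, w₂)) P) = 0 := by
      apply Stmt14.pderiv_pderiv_eq_zero_of hne
      intro m hm
      obtain ⟨f, hfM, rfl⟩ := hsupp m hm
      by_cases hc : f b₂ = w₂
      · right
        rw [hd, if_neg]
        intro hcc
        rcases hshare with rfl | rfl
        · exact hne (by rw [← hc, ← hcc])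
        · exact hne (by rw [f.injective (hcc.trans hc.symm)])
      · left
        rw [hd, if_neg hc]
    have hD12 : pderiv (Sum.inl (b₁, w₁)) (P₁ * pderiv (Sum.inl (b₂, w₂)) P₂) =
        pderiv (Sum.inl (b₁, w₁)) P₁ * pderiv (Sum.inl (b₂, w₂)) P₂ := by
      rw [pderiv_mul]
      have hzz : pderiv (Sum.inl (b₁, w₁)) (pderiv (Sum.inl (b₂, w₂)) P₂) = 0 :=
        Stmt14.pderiv_pderiv_eq_zero_of hne (fun m hm => Or.inr (hn12 m hm))
      rw [hzz, mul_zero, add_zero]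
    obtain ⟨m₁, hm₁, hv₁⟩ := hS1
    obtain ⟨m₂, hm₂, hv₂⟩ := hS2
    have hdne1 : pderiv (Sum.inl (b₁, w₁)) P₁ ≠ 0 := Stmt14.pderiv_ne_zero_of_mem hm₁ hv₁
    have hdne2 : pderiv (Sum.inl (b₂, w₂)) P₂ ≠ 0 := Stmt14.pderiv_ne_zero_of_mem hm₂ hv₂
    apply mul_ne_zero hdne1 hdne2
    rw [← hD12, ← hD2, hmix]
  -- final extraction
  have hfinal : ∀ Q₁ Q₂ : MvPolynomial ((B × W) ⊕ Fin 2) ℝ, P = Q₁ * Q₂ →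
      (∀ m ∈ Q₂.support, ∀ e : B × W, m (Sum.inl e) = 0) →
      ∃ (r : ℝ) (i j : ℕ), Q₂ = C r * X (Sum.inr 0) ^ i * X (Sum.inr 1) ^ j := by
    intro Q₁ Q₂ hQ hpure
    have hvars : (Q₂.vars : Set ((B × W) ⊕ Fin 2)) ⊆ Set.range Sum.inr := by
      intro v hv
      rw [Finset.mem_coe, mem_vars] at hv
      obtain ⟨m, hm, hvm⟩ := hv
      rcases v with e | i
      · exact absurd (hpure m hm e) (Finsupp.mem_support_iff.mp hvm)
      · exact ⟨i, rfl⟩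
    obtain ⟨q₂, hq₂⟩ :=
      exists_rename_eq_of_vars_subset_range Q₂ Sum.inr Sum.inr_injective hvars
    set Ψ := sumAlgEquiv ℝ (B × W) (Fin 2) with hΨ
    have hCinr : ∀ q : MvPolynomial (Fin 2) ℝ, Ψ (rename Sum.inr q) = C q := by
      intro q
      induction q using MvPolynomial.induction_on with
      | C a => rw [rename_C]; simp [hΨ]
      | add p q hp hq => rw [map_add, map_add, hp, hq, map_add]
      | mul_X p i hp => rw [map_mul, rename_X, map_mul, hp]; simp [hΨ]
    -- u
    set u : (B ≃ W) → ((B × W) →₀ ℕ) := fun f => ∑ b : B, Finsupp.single (b, f b) 1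
      with hu0
    have hu : ∀ (f : B ≃ W) (b : B) (w : W),
        u f (b, w) = if f b = w then 1 else 0 := by
      intro f b w
      rw [hu0]
      rw [Finsupp.finset_sum_apply]
      rw [Finset.sum_eq_single b]
      · simp [Finsupp.single_apply]
      · intro b' _ hb'
        rw [Finsupp.single_eq_of_ne']
        simp [hb']
      · intro hb; exact absurd (Finset.mem_univ b) hb
    have huinj : ∀ f g : B ≃ W, u f = u g → f = g := by
      intro f g h
      apply Equiv.ext
      intro b
      have h1 := DFunLike.congr_fun h (b, f b)
      rw [hu, hu, if_pos rfl] at h1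
      by_contra hne
      rw [if_neg (fun hh => hne hh.symm)] at h1
      exact one_ne_zero h1
    have hΨP : Ψ P = ∑ f ∈ M, monomial (u f)
        (C (ε f) * X 0 ^ ea f * X 1 ^ eb f : MvPolynomial (Fin 2) ℝ) := by
      rw [hP, map_sum]
      refine Finset.sum_congr rfl (fun f _ => ?_)
      rw [map_mul, map_mul, map_mul, map_pow, map_pow, map_prod]
      have hx : ∀ b : B, Ψ (X (Sum.inl (b, f b))) =
          (X (b, f b) : MvPolynomial (B × W) (MvPolynomial (Fin 2) ℝ)) := by
        intro b; simp [hΨ]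
      have hprod : (∏ b : B, Ψ (X (Sum.inl (b, f b)))) = monomial (u f) 1 := by
        rw [Finset.prod_congr rfl (fun b _ => hx b)]
        rw [Stmt14.prod_X_single]
      rw [hprod]
      have hc0 : Ψ (C (ε f)) = C (C (ε f)) := by simp [hΨ]
      have hx0 : Ψ (X (Sum.inr 0)) = C (X 0) := by simp [hΨ]
      have hx1 : Ψ (X (Sum.inr 1)) = C (X 1) := by simp [hΨ]
      rw [hc0, hx0, hx1, ← C_pow, ← C_pow, ← C_mul, ← C_mul,
        C_mul_monomial, mul_one]
    have hcoeffΨ : coeff (u f₀) (Ψ P) =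
        (C (ε f₀) * X 0 ^ ea f₀ * X 1 ^ eb f₀ : MvPolynomial (Fin 2) ℝ) := by
      rw [hΨP, coeff_sum]
      rw [Finset.sum_eq_single_of_mem f₀ hf₀M]
      · rw [coeff_monomial, if_pos rfl]
      · intro f _ hne
        rw [coeff_monomial, if_neg (fun h => hne (huinj f f₀ h))]
    have hΨQ₂ : Ψ Q₂ = C q₂ := by rw [← hq₂]; exact hCinr q₂
    have hdiv : coeff (u f₀) (Ψ Q₁) * q₂ =
        monomial (Finsupp.single 0 (ea f₀) + Finsupp.single 1 (eb f₀)) (ε f₀) := by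
      have h1 : coeff (u f₀) (Ψ P) = coeff (u f₀) (Ψ Q₁) * q₂ := by
        rw [hQ, map_mul, hΨQ₂, mul_comm (Ψ Q₁) (C q₂), coeff_C_mul, mul_comm]
      rw [← h1, hcoeffΨ, C_mul_X_pow_eq_monomial, X_pow_eq_monomial, monomial_mul,
        mul_one]
    obtain ⟨m', c', hq₂eq⟩ := Stmt14.eq_monomial_of_mul_eq_monomial (hε0 f₀) hdiv
    have hm' : m' = Finsupp.single 0 (m' 0) + Finsupp.single 1 (m' 1) := by
      ext i
      fin_cases i <;> simp [Finsupp.single_apply]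
    have hmap : Finsupp.mapDomain Sum.inr m' =
        Finsupp.single (Sum.inr 0 : (B × W) ⊕ Fin 2) (m' 0) +
          Finsupp.single (Sum.inr 1) (m' 1) := by
      conv_lhs => rw [hm']
      rw [Finsupp.mapDomain_add, Finsupp.mapDomain_single, Finsupp.mapDomain_single]
    refine ⟨c', m' 0, m' 1, ?_⟩
    rw [← hq₂, hq₂eq, rename_monomial, hmap]
    rw [C_mul_X_pow_eq_monomial, X_pow_eq_monomial, monomial_mul, mul_one]
  -- main case split
  by_cases hcase : ∃ p : B × W, Adj p.1 p.2 ∧ ∃ m ∈ P₂.support, 1 ≤ m (Sum.inl p)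
  · -- all adjacent edges are in P₂; P₁ is a monomial in α, β
    obtain ⟨⟨b₂, w₂⟩, hadj₂, hS₂⟩ := hcase
    have hstep0 : ∀ (b : B) (w : W) (b' : B) (w' : W), Adj b w → Adj b' w' →
        (b = b' ∨ w = w') → (∃ m ∈ P₂.support, 1 ≤ m (Sum.inl (b, w))) →
        ∃ m ∈ P₂.support, 1 ≤ m (Sum.inl (b', w')) := by
      intro b w b' w' hbw hb'w' hshare h2
      by_cases heq : (Sum.inl (b', w') : (B × W) ⊕ Fin 2) = Sum.inl (b, w)
      · rw [Sum.inl.injEq, Prod.mk.injEq] at heq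
        obtain ⟨rfl, rfl⟩ := heq
        exact h2
      · rcases hdich b' w' hb'w' with hS1 | hS2'
        · exact absurd (key b' w' b w hb'w' hbw heq
            (by rcases hshare with h | h; exact Or.inl h.symm; exact Or.inr h.symm)
            hS1 h2) not_false
        · exact hS2'
    have hAll : ∀ b w, Adj b w → ∃ m ∈ P₂.support, 1 ≤ m (Sum.inl (b, w)) := by
      intro b w hadj
      have hQ : ∀ y, Relation.ReflTransGen
          (fun p q => ∃ b' w', Adj b' w' ∧
            ((p = Sum.inl b' ∧ q = Sum.inr w') ∨ (p = Sum.inr w' ∧ q = Sum.inl b')))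
          (Sum.inl b₂) y →
          ∀ b' w', Adj b' w' → (y = Sum.inl b' ∨ y = Sum.inr w') →
            ∃ m ∈ P₂.support, 1 ≤ m (Sum.inl (b', w')) := by
        intro y h
        induction h with
        | refl =>
            intro b' w' hadj' hy
            rcases hy with hy | hy
            · rw [Sum.inl.injEq] at hy
              subst hy
              exact hstep0 b₂ w₂ b₂ w' hadj₂ hadj' (Or.inl rfl) hS₂
            · exact absurd hy (by simp)
        | @tail x y hx hxy ih =>
            obtain ⟨b₀, w₀, hadj₀, hc⟩ := hxy
            have hmid : ∃ m ∈ P₂.support, 1 ≤ m (Sum.inl (b₀, w₀)) := by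
              rcases hc with ⟨hx0, _⟩ | ⟨hx0, _⟩
              · exact ih b₀ w₀ hadj₀ (Or.inl hx0)
              · exact ih b₀ w₀ hadj₀ (Or.inr hx0)
            intro b' w' hadj' hy
            rcases hc with ⟨_, hy0⟩ | ⟨_, hy0⟩
            · -- y = inr w₀
              subst hy0
              rcases hy with hy | hy
              · exact absurd hy (by simp)
              · rw [Sum.inr.injEq] at hy
                subst hy
                exact hstep0 b₀ w₀ b' w₀ hadj₀ hadj' (Or.inr rfl) hmid
            · -- y = inl b₀
              subst hy0
              rcases hy with hy | hy
              · rw [Sum.inl.injEq] at hy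
                subst hy
                exact hstep0 b₀ w₀ b₀ w' hadj₀ hadj' (Or.inl rfl) hmid
              · exact absurd hy (by simp)
      exact hQ (Sum.inl b) (hconn _ _) b w hadj (Or.inl rfl)
    left
    apply hfinal P₂ P₁ (by rw [hfac, mul_comm])
    intro m hm e
    obtain ⟨b, w⟩ := e
    by_cases hadj : Adj b w
    · by_contra h0
      exact hexcl b w ⟨m, hm, by omega⟩ (hAll b w hadj)
    · exact hnonadjzero P₂ P₁ (by rw [hfac, mul_comm]) m hm b w hadj
  · -- no adjacent edge in P₂; P₂ is a monomial in α, β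
    right
    apply hfinal P₁ P₂ hfac
    intro m hm e
    obtain ⟨b, w⟩ := e
    by_cases hadj : Adj b w
    · by_contra h0
      exact hcase ⟨(b, w), hadj, m, hm, by omega⟩
    · exact hnonadjzero P₁ P₂ hfac m hm b w hadj
end
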